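/- Let 0 < β ≤ 1 and d ≥ 1. When the reduced star lossless coupling scheme is used, with each representative vertex assigned vertex-weight 1, the gateway vertex of a user joining p networks assigned vertex-weight k − p, and intermediate synchronization vertices assigned vertex-weight 0, a set S = {s_1,…,s_p} ⊆ U influences at least a β fraction of users in G^{1..k} after d propagation hops (i.e., |A^d(G^{1..k},S)| ≥ β·|U|) if and only if the total vertex-weight of the active vertices caused by S' = {s_1^0,…,s_p^0} after 3d hops in the reduced star coupled network G is at least a β fraction of the total vertex-weight of all vertices of G. -/

import Mathlib

open scoped Classical

/-- LT active sets on a single directed weighted network `G = (V, w, θ)`. -/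
noncomputable def ltIter {V : Type*} [Fintype V] [DecidableEq V]
    (w : V → V → ℝ) (θ : V → ℝ) (S : Finset V) : ℕ → Finset V
  | 0 => S
  | t + 1 =>
      ltIter w θ S t ∪
        Finset.univ.filter (fun x => θ x ≤ ∑ y ∈ ltIter w θ S t, w y x)

/-- LT active sets on the multiplex system `G^{1..k}`. -/
noncomputable def multiIter {U : Type*} [Fintype U] [DecidableEq U] {k : ℕ}
    (w : Fin k → U → U → ℝ) (θ : Fin k → U → ℝ) (S : Finset U) : ℕ → Finset U
  | 0 => S
  | t + 1 =>
      multiIter w θ S t ∪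
        Finset.univ.filter
          (fun u => ∃ i : Fin k, θ i u ≤ ∑ v ∈ multiIter w θ S t, w i v u)

/-- Vertex indices of the star lossless coupled network: `gateway` is the gateway
vertex `u⁰`, `rep i` is the representative vertex `uⁱ` (`1 ≤ i ≤ k`), and `mid` is
the intermediate synchronization vertex `u^{k+1}`. -/
inductive StarIdx (k : ℕ) where
  | gateway : StarIdx k
  | rep : Fin k → StarIdx k
  | mid : StarIdx k
  deriving DecidableEq, Fintype

/-- Thresholds of the star lossless coupled network: `θ(u⁰) = θ(u^{k+1}) = 1`;
`θ(uⁱ) = θ^i(u)` if `u ∈ V^i` and 1 otherwise. -/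
noncomputable def starTheta {U : Type*} [DecidableEq U] {k : ℕ}
    (Vmem : Fin k → Finset U) (θ : Fin k → U → ℝ) : U × StarIdx k → ℝ
  | (_, .gateway) => 1
  | (_, .mid) => 1
  | (u, .rep i) => if u ∈ Vmem i then θ i u else 1

/-- Edge weights of the star lossless coupled network:
`w(u⁰, vⁱ) = w^i(u, v)` for users `u ≠ v` and `1 ≤ i ≤ k`;
`w(uⁱ, u^{k+1}) = 1` and `w(u^{k+1}, uⁱ) = θ(uⁱ)` for `1 ≤ i ≤ k`;
`w(u^{k+1}, u⁰) = w(u⁰, u^{k+1}) = 1`; all other weights are 0. -/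
noncomputable def starW {U : Type*} [DecidableEq U] {k : ℕ}
    (Vmem : Fin k → Finset U) (w : Fin k → U → U → ℝ) (θ : Fin k → U → ℝ) :
    U × StarIdx k → U × StarIdx k → ℝ :=
  fun x y =>
    if x.1 = y.1 then
      match x.2, y.2 with
      | .rep _, .mid => 1
      | .mid, .rep _ => starTheta Vmem θ y
      | .mid, .gateway => 1
      | .gateway, .mid => 1
      | _, _ => 0
    else
      match x.2, y.2 with
      | .gateway, .rep i => w i x.1 y.1
      | _, _ => 0

/-- A vertex of the full star coupled vertex type is *created* in the reduced star
scheme iff it is a gateway or intermediate vertex, or a representative vertex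
`(u, rep i)` with `u ∈ V^i`. -/
def createdStar {U : Type*} {k : ℕ} (Vmem : Fin k → Finset U) :
    U × StarIdx k → Prop :=
  fun x => ∀ i : Fin k, x.2 = StarIdx.rep i → x.1 ∈ Vmem i

/-- Edge weights of the reduced star lossless coupled network: as in the star
scheme, but only between created vertices (non-created vertices are absent, i.e.
isolated with threshold 1, so they never become active). -/
noncomputable def redStarW {U : Type*} [DecidableEq U] {k : ℕ}
    (Vmem : Fin k → Finset U) (w : Fin k → U → U → ℝ) (θ : Fin k → U → ℝ) :
    U × StarIdx k → U × StarIdx k → ℝ :=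
  fun x y =>
    if createdStar Vmem x ∧ createdStar Vmem y then starW Vmem w θ x y else 0

/-- Vertex-weights of the reduced star scheme: each created representative vertex
has weight 1; the gateway vertex of a user joining `p` networks has weight `k - p`;
intermediate vertices have weight 0; non-created (absent) vertices have weight 0. -/
noncomputable def redStarVW {U : Type*} [Fintype U] [DecidableEq U] {k : ℕ}
    (Vmem : Fin k → Finset U) : U × StarIdx k → ℝ
  | (u, .gateway) =>
      (k : ℝ) - ((Finset.univ.filter (fun i : Fin k => u ∈ Vmem i)).card : ℝ)
  | (_, .mid) => 0
  | (u, .rep i) => if u ∈ Vmem i then 1 else 0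

set_option linter.unusedSectionVars false

section Aux
variable {U : Type*} [Fintype U] [DecidableEq U] {k : ℕ}
variable (Vmem : Fin k → Finset U) (w : Fin k → U → U → ℝ) (θ : Fin k → U → ℝ)

lemma created_gateway (u : U) : createdStar Vmem (u, StarIdx.gateway) := by
  intro i h; exact absurd h (by simp)

lemma created_mid (u : U) : createdStar Vmem (u, StarIdx.mid) := by
  intro i h; exact absurd h (by simp)

lemma created_rep {u : U} {i : Fin k} (h : u ∈ Vmem i) :
    createdStar Vmem (u, StarIdx.rep i) := by
  intro j hj
  obtain rfl : i = j := by simpa using hj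
  exact h

lemma W_to_gateway (y : U × StarIdx k) (u : U) :
    redStarW Vmem w θ y (u, StarIdx.gateway) =
      if y = (u, StarIdx.mid) then 1 else 0 := by
  obtain ⟨v, s⟩ := y
  by_cases hv : v = u
  · subst hv
    rcases s <;> simp [redStarW, starW, created_gateway, created_mid, createdStar]
  · rcases s <;> simp [redStarW, starW, hv, Prod.ext_iff]

lemma W_to_mid (y : U × StarIdx k) (u : U) :
    redStarW Vmem w θ y (u, StarIdx.mid) =
      if y.1 = u ∧ y.2 ≠ StarIdx.mid ∧ createdStar Vmem y then 1 else 0 := by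
  obtain ⟨v, s⟩ := y
  by_cases hv : v = u
  · subst hv
    rcases s with _ | i | _
    · simp [redStarW, starW, created_gateway, created_mid]
    · by_cases hi : v ∈ Vmem i <;>
        simp [redStarW, starW, created_mid, created_rep, hi, createdStar]
    · simp [redStarW, starW, created_mid, createdStar]
  · rcases s <;> simp [redStarW, starW, hv]

lemma W_to_rep (y : U × StarIdx k) (u : U) (i : Fin k) :
    redStarW Vmem w θ y (u, StarIdx.rep i) =
      if u ∈ Vmem i then
        (if y = (u, StarIdx.mid) then θ i u else 0) +
          (if y.2 = StarIdx.gateway ∧ y.1 ≠ u then w i y.1 u else 0)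
      else 0 := by
  obtain ⟨v, s⟩ := y
  by_cases hui : u ∈ Vmem i
  · by_cases hv : v = u
    · subst hv
      rcases s <;>
        simp [redStarW, starW, starTheta, created_gateway, created_mid,
          created_rep Vmem hui, hui, createdStar, Prod.ext_iff]
    · rcases s <;>
        simp [redStarW, starW, starTheta, created_gateway, created_mid,
          created_rep Vmem hui, hv, Prod.ext_iff, createdStar]
  · have hnc : ¬ createdStar Vmem (u, StarIdx.rep i) := by
      intro h; exact hui (h i rfl)
    simp [redStarW, hnc, hui]

end Aux
section Aux2
variable {U : Type*} [Fintype U] [DecidableEq U] {k : ℕ}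
variable (Vmem : Fin k → Finset U) (w : Fin k → U → U → ℝ) (θ : Fin k → U → ℝ)

/-- gateways of an active set -/
noncomputable def gwA (A : Finset (U × StarIdx k)) : Finset U :=
  Finset.univ.filter (fun v => (v, StarIdx.gateway) ∈ A)

lemma cond_gateway (A : Finset (U × StarIdx k)) (u : U) :
    (starTheta Vmem θ (u, StarIdx.gateway) ≤ ∑ y ∈ A, redStarW Vmem w θ y (u, StarIdx.gateway))
      ↔ (u, StarIdx.mid) ∈ A := by
  simp only [W_to_gateway, Finset.sum_ite_eq', starTheta]
  split_ifs with h <;> simp [h]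

lemma cond_mid (A : Finset (U × StarIdx k)) (u : U) :
    (starTheta Vmem θ (u, StarIdx.mid) ≤ ∑ y ∈ A, redStarW Vmem w θ y (u, StarIdx.mid))
      ↔ ∃ y ∈ A, y.1 = u ∧ y.2 ≠ StarIdx.mid ∧ createdStar Vmem y := by
  simp only [W_to_mid, Finset.sum_boole, starTheta]
  rw [Nat.one_le_cast, Nat.one_le_iff_ne_zero, ← Nat.pos_iff_ne_zero, Finset.card_pos]
  simp [Finset.filter_nonempty_iff]

lemma cond_rep (hw0 : ∀ i v u, 0 ≤ w i v u) (hθpos : ∀ i u, 0 < θ i u)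
    (A : Finset (U × StarIdx k)) (u : U) (i : Fin k) :
    (starTheta Vmem θ (u, StarIdx.rep i) ≤ ∑ y ∈ A, redStarW Vmem w θ y (u, StarIdx.rep i))
      ↔ (u ∈ Vmem i ∧ ((u, StarIdx.mid) ∈ A ∨
          θ i u ≤ ∑ v ∈ (gwA A).erase u, w i v u)) := by
  by_cases hui : u ∈ Vmem i
  · have hsum : ∑ y ∈ A, redStarW Vmem w θ y (u, StarIdx.rep i)
        = (if (u, StarIdx.mid) ∈ A then θ i u else 0) + ∑ v ∈ (gwA A).erase u, w i v u := by
      simp only [W_to_rep, hui, if_true, Finset.sum_add_distrib, Finset.sum_ite_eq']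
      congr 1
      rw [← Finset.sum_filter]
      rw [show A.filter (fun y => y.2 = StarIdx.gateway ∧ y.1 ≠ u)
            = ((gwA A).erase u).image (fun v => (v, StarIdx.gateway)) from ?_]
      · rw [Finset.sum_image (by intro a _ b _ h; simpa using h)]
      · ext ⟨v, s⟩
        simp only [Finset.mem_filter, Finset.mem_image, Finset.mem_erase, gwA,
          Finset.mem_univ, true_and]
        constructor
        · rintro ⟨hA, hs, hv⟩
          exact ⟨v, ⟨hv, by rwa [hs] at hA⟩, by rw [hs]⟩
        · rintro ⟨a, ⟨ha, hA⟩, h⟩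
          obtain ⟨rfl, rfl⟩ : a = v ∧ StarIdx.gateway = s := by
            simpa [Prod.ext_iff] using h
          exact ⟨hA, rfl, ha⟩
    have hnn : (0:ℝ) ≤ ∑ v ∈ (gwA A).erase u, w i v u :=
      Finset.sum_nonneg fun v _ => hw0 i v u
    rw [hsum]
    simp only [starTheta, if_pos hui]
    constructor
    · intro h
      refine ⟨hui, ?_⟩
      by_cases hm : (u, StarIdx.mid) ∈ A
      · exact Or.inl hm
      · simp only [hm, if_false, zero_add] at h; exact Or.inr h
    · rintro ⟨-, hm | hle⟩
      · simp only [hm, if_true]; linarith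
      · split_ifs with h
        · linarith [(hθpos i u).le]
        · linarith
  · have hz : ∀ y, redStarW Vmem w θ y (u, StarIdx.rep i) = 0 := by
      intro y; rw [W_to_rep]; simp [hui]
    simp [Finset.sum_congr rfl (fun y _ => hz y), starTheta, hui]

end Aux2
section Aux3
variable {U : Type*} [Fintype U] [DecidableEq U] {k : ℕ}
variable (Vmem : Fin k → Finset U) (w : Fin k → U → U → ℝ) (θ : Fin k → U → ℝ)

lemma mem_ltIter_succ {V : Type*} [Fintype V] [DecidableEq V]
    (w' : V → V → ℝ) (θ' : V → ℝ) (S' : Finset V) (n : ℕ) (x : V) :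
    x ∈ ltIter w' θ' S' (n+1) ↔
      x ∈ ltIter w' θ' S' n ∨ θ' x ≤ ∑ y ∈ ltIter w' θ' S' n, w' y x := by
  simp [ltIter]

/-- trigger predicate: representative vertex directly activated by gateways of `B`. -/
def trigP (B : Finset U) (x : U × StarIdx k) : Prop :=
  ∃ i, x.2 = StarIdx.rep i ∧ x.1 ∈ Vmem i ∧ θ i x.1 ≤ ∑ v ∈ B.erase x.1, w i v x.1

/-- users triggered by `B`. -/
noncomputable def trigU (B : Finset U) : Finset U :=
  Finset.univ.filter (fun u => ∃ i, u ∈ Vmem i ∧ θ i u ≤ ∑ v ∈ B.erase u, w i v u)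

/-- users activated in one multiplex step. -/
noncomputable def nextU (B : Finset U) : Finset U :=
  Finset.univ.filter (fun u => ∃ i, θ i u ≤ ∑ v ∈ B, w i v u)

lemma trigP_gateway {B : Finset U} {u : U} : ¬ trigP Vmem w θ B (u, StarIdx.gateway) := by
  rintro ⟨i, h, -⟩; exact absurd h (by simp)

lemma trigP_mid {B : Finset U} {u : U} : ¬ trigP Vmem w θ B (u, StarIdx.mid) := by
  rintro ⟨i, h, -⟩; exact absurd h (by simp)

lemma trigP_rep {B : Finset U} {u : U} {i : Fin k} :
    trigP Vmem w θ B (u, StarIdx.rep i) ↔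
      u ∈ Vmem i ∧ θ i u ≤ ∑ v ∈ B.erase u, w i v u := by
  constructor
  · rintro ⟨j, hj, h1, h2⟩
    obtain rfl : i = j := by simpa using hj
    exact ⟨h1, h2⟩
  · rintro ⟨h1, h2⟩; exact ⟨i, rfl, h1, h2⟩

lemma trigP_created {B : Finset U} {x : U × StarIdx k} (h : trigP Vmem w θ B x) :
    createdStar Vmem x := by
  obtain ⟨i, hi, h1, -⟩ := h
  intro j hj
  rw [hi] at hj
  obtain rfl : i = j := by simpa using hj
  exact h1

lemma mem_trigU {B : Finset U} {u : U} :
    u ∈ trigU Vmem w θ B ↔ ∃ i, trigP Vmem w θ B (u, StarIdx.rep i) := by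
  simp [trigU, trigP_rep]

lemma union_trigU_eq (hwV : ∀ i v u, v ∉ Vmem i ∨ u ∉ Vmem i → w i v u = 0)
    (hθpos : ∀ i u, 0 < θ i u) (B : Finset U) :
    B ∪ trigU Vmem w θ B = B ∪ nextU w θ B := by
  ext u
  simp only [Finset.mem_union, trigU, nextU, Finset.mem_filter, Finset.mem_univ, true_and]
  by_cases hu : u ∈ B
  · simp [hu]
  · have herase : B.erase u = B := Finset.erase_eq_of_notMem hu
    rw [herase]
    constructor
    · rintro (h | ⟨i, -, h⟩)
      · exact Or.inl h
      · exact Or.inr ⟨i, h⟩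
    · rintro (h | ⟨i, h⟩)
      · exact Or.inl h
      · refine Or.inr ⟨i, ?_, h⟩
        by_contra hui
        have : ∑ v ∈ B, w i v u = 0 :=
          Finset.sum_eq_zero fun v _ => hwV i v u (Or.inr hui)
        rw [this] at h
        exact absurd h (not_le.mpr (hθpos i u))

end Aux3
section Aux4
variable {U : Type*} [Fintype U] [DecidableEq U] {k : ℕ}
variable (Vmem : Fin k → Finset U) (w : Fin k → U → U → ℝ) (θ : Fin k → U → ℝ)
variable (hw0 : ∀ i v u, 0 ≤ w i v u) (hθpos : ∀ i u, 0 < θ i u)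
variable (T : Finset (U × StarIdx k))

local notation "L" => ltIter (redStarW Vmem w θ) (starTheta Vmem θ) T

lemma created_rep_iff {u : U} {i : Fin k} :
    createdStar Vmem (u, StarIdx.rep i) ↔ u ∈ Vmem i :=
  ⟨fun h => h i rfl, fun h => created_rep Vmem h⟩

include hw0 hθpos in
lemma stageA (B : Finset U) (n : ℕ)
    (h : ∀ x, x ∈ L n ↔ x.1 ∈ B ∧ createdStar Vmem x) :
    ∀ x, x ∈ L (n+1) ↔ (x.1 ∈ B ∧ createdStar Vmem x) ∨ trigP Vmem w θ B x := by
  have hmid : ∀ u : U, ((u, StarIdx.mid) ∈ L n ↔ u ∈ B) := by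
    intro u; rw [h]; simp [created_mid]
  have hgw : gwA (L n) = B := by
    ext v; simp [gwA, h, created_gateway]
  have hne : ∀ u : U,
      ((∃ y ∈ L n, y.1 = u ∧ y.2 ≠ StarIdx.mid ∧ createdStar Vmem y) ↔ u ∈ B) := by
    intro u
    constructor
    · rintro ⟨y, hy, rfl, -, -⟩; exact ((h y).1 hy).1
    · intro hu
      exact ⟨(u, StarIdx.gateway), (h _).2 ⟨hu, created_gateway Vmem u⟩, rfl, by simp,
        created_gateway Vmem u⟩
  rintro ⟨u, s⟩
  rw [mem_ltIter_succ]
  rcases s with _ | i | _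
  · rw [cond_gateway, hmid, h]
    simp [created_gateway, trigP_gateway Vmem w θ]
  · rw [cond_rep Vmem w θ hw0 hθpos, hgw, hmid, h, trigP_rep]
    simp only [created_rep_iff]
    tauto
  · rw [cond_mid, hne, hmid]
    simp [trigP_mid Vmem w θ, created_mid]

include hw0 hθpos in
lemma stageB (B : Finset U) (n : ℕ)
    (h : ∀ x, x ∈ L n ↔ (x.1 ∈ B ∧ createdStar Vmem x) ∨ trigP Vmem w θ B x) :
    ∀ x, x ∈ L (n+1) ↔ (x.1 ∈ B ∧ createdStar Vmem x) ∨ trigP Vmem w θ B x ∨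
      (x.2 = StarIdx.mid ∧ x.1 ∈ trigU Vmem w θ B) := by
  have hmid : ∀ u : U, ((u, StarIdx.mid) ∈ L n ↔ u ∈ B) := by
    intro u; rw [h]; simp [created_mid, trigP_mid Vmem w θ]
  have hgw : gwA (L n) = B := by
    ext v; simp [gwA, h, created_gateway, trigP_gateway Vmem w θ]
  have hne : ∀ u : U,
      ((∃ y ∈ L n, y.1 = u ∧ y.2 ≠ StarIdx.mid ∧ createdStar Vmem y) ↔
        u ∈ B ∨ u ∈ trigU Vmem w θ B) := by
    intro u
    constructor
    · rintro ⟨y, hy, rfl, -, -⟩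
      rcases (h y).1 hy with ⟨hy1, -⟩ | ht
      · exact Or.inl hy1
      · refine Or.inr ((mem_trigU Vmem w θ).mpr ?_)
        obtain ⟨i, hi, h1, h2⟩ := ht
        exact ⟨i, i, rfl, h1, h2⟩
    · rintro (hu | hu)
      · exact ⟨(u, StarIdx.gateway), (h _).2 (Or.inl ⟨hu, created_gateway Vmem u⟩), rfl,
          by simp, created_gateway Vmem u⟩
      · obtain ⟨i, hti⟩ := (mem_trigU Vmem w θ).1 hu
        exact ⟨(u, StarIdx.rep i), (h _).2 (Or.inr hti), rfl, by simp,
          trigP_created Vmem w θ hti⟩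
  rintro ⟨u, s⟩
  rw [mem_ltIter_succ]
  rcases s with _ | i | _
  · rw [cond_gateway, hmid, h]
    simp [created_gateway, trigP_gateway Vmem w θ]
    all_goals tauto
  · rw [cond_rep Vmem w θ hw0 hθpos, hgw, hmid, h, trigP_rep]
    simp only [created_rep_iff, trigP_rep]
    simp only [show ((StarIdx.rep i : StarIdx k) = StarIdx.mid) = False from by simp,
      false_and, or_false]
    tauto
  · rw [cond_mid, hne, hmid]
    simp [trigP_mid Vmem w θ, created_mid]
    all_goals tauto

include hw0 hθpos in
lemma stageC (B : Finset U) (n : ℕ)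
    (h : ∀ x, x ∈ L n ↔ (x.1 ∈ B ∧ createdStar Vmem x) ∨ trigP Vmem w θ B x ∨
      (x.2 = StarIdx.mid ∧ x.1 ∈ trigU Vmem w θ B)) :
    ∀ x, x ∈ L (n+1) ↔ x.1 ∈ B ∪ trigU Vmem w θ B ∧ createdStar Vmem x := by
  have hmid : ∀ u : U, ((u, StarIdx.mid) ∈ L n ↔ u ∈ B ∨ u ∈ trigU Vmem w θ B) := by
    intro u; rw [h]; simp [created_mid, trigP_mid Vmem w θ]
  have hgw : gwA (L n) = B := by
    ext v; simp [gwA, h, created_gateway, trigP_gateway Vmem w θ]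
  have hne : ∀ u : U,
      ((∃ y ∈ L n, y.1 = u ∧ y.2 ≠ StarIdx.mid ∧ createdStar Vmem y) ↔
        u ∈ B ∨ u ∈ trigU Vmem w θ B) := by
    intro u
    constructor
    · rintro ⟨y, hy, rfl, hym, -⟩
      rcases (h y).1 hy with ⟨hy1, -⟩ | ht | ⟨hm, -⟩
      · exact Or.inl hy1
      · refine Or.inr ((mem_trigU Vmem w θ).mpr ?_)
        obtain ⟨i, hi, h1, h2⟩ := ht
        exact ⟨i, i, rfl, h1, h2⟩
      · exact absurd hm hym
    · rintro (hu | hu)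
      · exact ⟨(u, StarIdx.gateway), (h _).2 (Or.inl ⟨hu, created_gateway Vmem u⟩), rfl,
          by simp, created_gateway Vmem u⟩
      · obtain ⟨i, hti⟩ := (mem_trigU Vmem w θ).1 hu
        exact ⟨(u, StarIdx.rep i), (h _).2 (Or.inr (Or.inl hti)), rfl, by simp,
          trigP_created Vmem w θ hti⟩
  rintro ⟨u, s⟩
  rw [mem_ltIter_succ]
  rcases s with _ | i | _
  · rw [cond_gateway, hmid, h]
    simp [created_gateway, trigP_gateway Vmem w θ]
    all_goals tauto
  · have htu : u ∈ Vmem i → θ i u ≤ ∑ v ∈ B.erase u, w i v u →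
        u ∈ trigU Vmem w θ B := fun a b =>
      (mem_trigU Vmem w θ).mpr ⟨i, (trigP_rep Vmem w θ).mpr ⟨a, b⟩⟩
    have htu' : u ∈ trigU Vmem w θ B → u ∈ Vmem i → True := fun _ _ => trivial
    rw [cond_rep Vmem w θ hw0 hθpos, hgw, hmid, h, trigP_rep]
    simp only [created_rep_iff, Finset.mem_union,
      show ((StarIdx.rep i : StarIdx k) = StarIdx.mid) = False from by simp, false_and,
      or_false]
    tauto
  · rw [cond_mid, hne, hmid]
    simp [trigP_mid Vmem w θ, created_mid, Finset.mem_union]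
    all_goals tauto


variable (S : Finset U)

local notation "LS" => ltIter (redStarW Vmem w θ) (starTheta Vmem θ)
  (S.image (fun s => (s, (StarIdx.gateway : StarIdx k))))

lemma stage0 : ∀ x, x ∈ LS 0 ↔ x.2 = StarIdx.gateway ∧ x.1 ∈ S := by
  rintro ⟨u, s⟩
  show (u, s) ∈ S.image _ ↔ _
  simp only [Finset.mem_image, Prod.ext_iff]
  constructor
  · rintro ⟨a, ha, rfl, rfl⟩; exact ⟨rfl, ha⟩
  · rintro ⟨rfl, hu⟩; exact ⟨u, hu, rfl, rfl⟩

include hw0 hθpos in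
lemma stage1 : ∀ x, x ∈ LS 1 ↔
    (x.2 = StarIdx.gateway ∧ x.1 ∈ S) ∨ (x.2 = StarIdx.mid ∧ x.1 ∈ S) ∨
      trigP Vmem w θ S x := by
  have h := stage0 Vmem w θ S
  have hmid : ∀ u : U, ((u, StarIdx.mid) ∈ LS 0 ↔ False) := by
    intro u; rw [h]; simp
  have hgw : gwA (LS 0) = S := by
    ext v; simp [gwA, h]
  have hne : ∀ u : U,
      ((∃ y ∈ LS 0, y.1 = u ∧ y.2 ≠ StarIdx.mid ∧ createdStar Vmem y) ↔ u ∈ S) := by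
    intro u
    constructor
    · rintro ⟨y, hy, rfl, -, -⟩; exact ((h y).1 hy).2
    · intro hu
      exact ⟨(u, StarIdx.gateway), (h _).2 ⟨rfl, hu⟩, rfl, by simp,
        created_gateway Vmem u⟩
  rintro ⟨u, s⟩
  rw [mem_ltIter_succ]
  rcases s with _ | i | _
  · rw [cond_gateway, hmid, h]
    simp [trigP_gateway Vmem w θ]
  · rw [cond_rep Vmem w θ hw0 hθpos, hgw, hmid, h, trigP_rep]
    simp
  · rw [cond_mid, hne, hmid]
    simp [trigP_mid Vmem w θ]

include hw0 hθpos in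
lemma stage2 : ∀ x, x ∈ LS 2 ↔
    (x.2 = StarIdx.gateway ∧ x.1 ∈ S) ∨ (x.2 = StarIdx.mid ∧ x.1 ∈ S) ∨
      trigP Vmem w θ S x ∨ (x.2 = StarIdx.mid ∧ x.1 ∈ trigU Vmem w θ S) ∨
      (∃ i, x.2 = StarIdx.rep i ∧ x.1 ∈ Vmem i ∧ x.1 ∈ S) := by
  have h := stage1 Vmem w θ hw0 hθpos S
  have hmid : ∀ u : U, ((u, StarIdx.mid) ∈ LS 1 ↔ u ∈ S) := by
    intro u; rw [h]; simp [trigP_mid Vmem w θ]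
  have hgw : gwA (LS 1) = S := by
    ext v; simp [gwA, h, trigP_gateway Vmem w θ]
  have hne : ∀ u : U,
      ((∃ y ∈ LS 1, y.1 = u ∧ y.2 ≠ StarIdx.mid ∧ createdStar Vmem y) ↔
        u ∈ S ∨ u ∈ trigU Vmem w θ S) := by
    intro u
    constructor
    · rintro ⟨y, hy, rfl, hym, -⟩
      rcases (h y).1 hy with ⟨-, hy1⟩ | ⟨hm, -⟩ | ht
      · exact Or.inl hy1
      · exact absurd hm hym
      · refine Or.inr ((mem_trigU Vmem w θ).mpr ?_)
        obtain ⟨i, hi, h1, h2⟩ := ht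
        exact ⟨i, i, rfl, h1, h2⟩
    · rintro (hu | hu)
      · exact ⟨(u, StarIdx.gateway), (h _).2 (Or.inl ⟨rfl, hu⟩), rfl, by simp,
          created_gateway Vmem u⟩
      · obtain ⟨i, hti⟩ := (mem_trigU Vmem w θ).1 hu
        exact ⟨(u, StarIdx.rep i), (h _).2 (Or.inr (Or.inr hti)), rfl, by simp,
          trigP_created Vmem w θ hti⟩
  rintro ⟨u, s⟩
  rw [mem_ltIter_succ]
  rcases s with _ | i | _
  · rw [cond_gateway, hmid, h]
    simp [trigP_gateway Vmem w θ]
  · rw [cond_rep Vmem w θ hw0 hθpos, hgw, hmid, h, trigP_rep]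
    simp only [trigP_rep, StarIdx.rep.injEq,
      show ((StarIdx.rep i : StarIdx k) = StarIdx.gateway) = False from by simp,
      show ((StarIdx.rep i : StarIdx k) = StarIdx.mid) = False from by simp,
      false_and, or_false, false_or, exists_eq_left']
    tauto
  · rw [cond_mid, hne, hmid]
    simp [trigP_mid Vmem w θ]
    all_goals tauto

include hw0 hθpos in
lemma stage3 : ∀ x, x ∈ LS 3 ↔
    x.1 ∈ S ∪ trigU Vmem w θ S ∧ createdStar Vmem x := by
  have h := stage2 Vmem w θ hw0 hθpos S
  have hmid : ∀ u : U, ((u, StarIdx.mid) ∈ LS 2 ↔ u ∈ S ∨ u ∈ trigU Vmem w θ S) := by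
    intro u; rw [h]; simp [trigP_mid Vmem w θ]
  have hgw : gwA (LS 2) = S := by
    ext v; simp [gwA, h, trigP_gateway Vmem w θ]
  have hne : ∀ u : U,
      ((∃ y ∈ LS 2, y.1 = u ∧ y.2 ≠ StarIdx.mid ∧ createdStar Vmem y) ↔
        u ∈ S ∨ u ∈ trigU Vmem w θ S) := by
    intro u
    constructor
    · rintro ⟨y, hy, rfl, hym, -⟩
      rcases (h y).1 hy with ⟨-, hy1⟩ | ⟨hm, -⟩ | ht | ⟨hm, -⟩ | ⟨i, -, -, hy1⟩
      · exact Or.inl hy1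
      · exact absurd hm hym
      · refine Or.inr ((mem_trigU Vmem w θ).mpr ?_)
        obtain ⟨i, hi, h1, h2⟩ := ht
        exact ⟨i, i, rfl, h1, h2⟩
      · exact absurd hm hym
      · exact Or.inl hy1
    · rintro (hu | hu)
      · exact ⟨(u, StarIdx.gateway), (h _).2 (Or.inl ⟨rfl, hu⟩), rfl, by simp,
          created_gateway Vmem u⟩
      · obtain ⟨i, hti⟩ := (mem_trigU Vmem w θ).1 hu
        exact ⟨(u, StarIdx.rep i), (h _).2 (Or.inr (Or.inr (Or.inl hti))), rfl, by simp,
          trigP_created Vmem w θ hti⟩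
  rintro ⟨u, s⟩
  rw [mem_ltIter_succ]
  rcases s with _ | i | _
  · rw [cond_gateway, hmid, h]
    simp [trigP_gateway Vmem w θ, created_gateway, Finset.mem_union]
  · have htu : u ∈ Vmem i → θ i u ≤ ∑ v ∈ S.erase u, w i v u →
        u ∈ trigU Vmem w θ S := fun a b =>
      (mem_trigU Vmem w θ).mpr ⟨i, (trigP_rep Vmem w θ).mpr ⟨a, b⟩⟩
    rw [cond_rep Vmem w θ hw0 hθpos, hgw, hmid, h, trigP_rep]
    simp only [trigP_rep, StarIdx.rep.injEq, created_rep_iff, Finset.mem_union,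
      show ((StarIdx.rep i : StarIdx k) = StarIdx.gateway) = False from by simp,
      show ((StarIdx.rep i : StarIdx k) = StarIdx.mid) = False from by simp,
      false_and, or_false, false_or, exists_eq_left']
    tauto
  · rw [cond_mid, hne, hmid]
    simp [trigP_mid Vmem w θ, created_mid, Finset.mem_union]
    all_goals tauto

end Aux4
section Aux5
variable {U : Type*} [Fintype U] [DecidableEq U] {k : ℕ}
variable (Vmem : Fin k → Finset U) (w : Fin k → U → U → ℝ) (θ : Fin k → U → ℝ)
variable (hw0 : ∀ i v u, 0 ≤ w i v u)
variable (hwV : ∀ i v u, v ∉ Vmem i ∨ u ∉ Vmem i → w i v u = 0)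
variable (hθpos : ∀ i u, 0 < θ i u)

lemma multiIter_succ (S : Finset U) (t : ℕ) :
    multiIter w θ S (t+1) = multiIter w θ S t ∪ nextU w θ (multiIter w θ S t) := by
  rfl

local notation "LS" S => ltIter (redStarW Vmem w θ) (starTheta Vmem θ)
  (Finset.image (fun s => (s, (StarIdx.gateway : StarIdx k))) S)

include hw0 hwV hθpos in
lemma main_descr (S : Finset U) : ∀ t : ℕ, ∀ x, x ∈ (LS S) (3*t+3) ↔
    x.1 ∈ multiIter w θ S (t+1) ∧ createdStar Vmem x := by
  intro t
  induction t with
  | zero =>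
    intro x
    rw [show (3*0+3 : ℕ) = 3 by norm_num]
    rw [stage3 Vmem w θ hw0 hθpos S x]
    rw [union_trigU_eq Vmem w θ hwV hθpos S]
    rw [multiIter_succ w θ S 0]
    rfl
  | succ t ih =>
    have hA := stageA Vmem w θ hw0 hθpos _ (multiIter w θ S (t+1)) (3*t+3) ih
    have hB := stageB Vmem w θ hw0 hθpos _ (multiIter w θ S (t+1)) (3*t+3+1) hA
    have hC := stageC Vmem w θ hw0 hθpos _ (multiIter w θ S (t+1)) (3*t+3+1+1) hB
    intro x
    rw [show 3*(t+1)+3 = (3*t+3+1+1)+1 from by ring]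
    rw [hC x, union_trigU_eq Vmem w θ hwV hθpos, multiIter_succ w θ S (t+1)]

def starEquiv (k : ℕ) : StarIdx k ≃ (Fin k ⊕ Bool) where
  toFun := fun s => match s with
    | .gateway => .inr false
    | .mid => .inr true
    | .rep i => .inl i
  invFun := fun x => match x with
    | .inl i => .rep i
    | .inr false => .gateway
    | .inr true => .mid
  left_inv := by rintro (_ | i | _) <;> rfl
  right_inv := by rintro (i | b)
                  · rfl
                  · rcases b <;> rfl

lemma sum_starIdx (f : StarIdx k → ℝ) :
    ∑ s : StarIdx k, f s = f .gateway + f .mid + ∑ i : Fin k, f (.rep i) := by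
  rw [Fintype.sum_equiv (starEquiv k) f (fun x => f ((starEquiv k).symm x))
    (fun x => by simp)]
  rw [Fintype.sum_sum_type, Fintype.sum_bool]
  simp [starEquiv]
  ring

lemma sum_vw_full (B : Finset U) :
    ∑ x ∈ Finset.univ.filter
        (fun x : U × StarIdx k => x.1 ∈ B ∧ createdStar Vmem x), redStarVW Vmem x
      = (k : ℝ) * B.card := by
  have hsub : Finset.univ.filter (fun x : U × StarIdx k => x.1 ∈ B ∧ createdStar Vmem x)
      ⊆ B ×ˢ Finset.univ := by
    intro x hx
    simp only [Finset.mem_filter, Finset.mem_univ, true_and] at hx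
    simp [Finset.mem_product, hx.1]
  have hzero : ∀ x ∈ B ×ˢ Finset.univ,
      x ∉ Finset.univ.filter (fun x : U × StarIdx k => x.1 ∈ B ∧ createdStar Vmem x) →
        redStarVW Vmem x = 0 := by
    rintro ⟨u, s⟩ hx hnx
    simp only [Finset.mem_filter, Finset.mem_univ, true_and, not_and,
      Finset.mem_product] at hx hnx
    have hnc := hnx hx.1
    rcases s with _ | i | _
    · exact absurd (created_gateway Vmem u) hnc
    · have : u ∉ Vmem i := fun h => hnc (created_rep Vmem h)
      simp [redStarVW, this]
    · exact absurd (created_mid Vmem u) hnc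
  rw [Finset.sum_subset hsub hzero]
  rw [Finset.sum_product]
  rw [Finset.sum_congr rfl (fun u _ => sum_starIdx (fun s => redStarVW Vmem (u, s)))]
  have huser : ∀ u : U, redStarVW Vmem (u, StarIdx.gateway) + redStarVW Vmem (u, StarIdx.mid)
      + ∑ i : Fin k, redStarVW Vmem (u, StarIdx.rep i) = (k : ℝ) := by
    intro u
    have : ∑ i : Fin k, redStarVW Vmem (u, StarIdx.rep i)
        = ((Finset.univ.filter (fun i : Fin k => u ∈ Vmem i)).card : ℝ) := by
      simp [redStarVW, Finset.sum_boole]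
    rw [this]
    simp [redStarVW]
  rw [Finset.sum_congr rfl (fun u _ => huser u), Finset.sum_const, nsmul_eq_mul, mul_comm]

end Aux5
/-- **Theorem 4, star case.** With the reduced star lossless coupling
scheme and the above vertex-weights, a seed set `S ⊆ U` influences at least a `β`
fraction of the users of `G^{1..k}` after `d` hops iff the total vertex-weight of
the active vertices caused by `S' = { s⁰ : s ∈ S }` after `3d` hops in the reduced
star coupled network is at least a `β` fraction of the total vertex-weight of all
its vertices. -/
theorem reduced_star_beta_fraction_iff
    {U : Type*} [Fintype U] [DecidableEq U] {k : ℕ} (hk : 1 ≤ k)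
    (Vmem : Fin k → Finset U) (w : Fin k → U → U → ℝ) (θ : Fin k → U → ℝ)
    (hw0 : ∀ i v u, 0 ≤ w i v u)
    (hwV : ∀ i v u, v ∉ Vmem i ∨ u ∉ Vmem i → w i v u = 0)
    (hθpos : ∀ i u, 0 < θ i u)
    (β : ℝ) (hβ0 : 0 < β) (hβ1 : β ≤ 1)
    (S : Finset U) (d : ℕ) (hd : 1 ≤ d) :
    β * (Fintype.card U : ℝ) ≤ ((multiIter w θ S d).card : ℝ) ↔
      β * (∑ x ∈ Finset.univ.filter
              (fun x : U × StarIdx k => createdStar Vmem x),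
            redStarVW Vmem x) ≤
        ∑ x ∈ ltIter (redStarW Vmem w θ) (starTheta Vmem θ)
            (S.image (fun s => (s, (StarIdx.gateway : StarIdx k)))) (3 * d),
          redStarVW Vmem x  := by
  obtain ⟨t, rfl⟩ : ∃ t, d = t + 1 := ⟨d - 1, (Nat.succ_pred_eq_of_pos hd).symm⟩
  have hL : ltIter (redStarW Vmem w θ) (starTheta Vmem θ)
      (S.image (fun s => (s, (StarIdx.gateway : StarIdx k)))) (3*(t+1))
      = Finset.univ.filter (fun x : U × StarIdx k =>
          x.1 ∈ multiIter w θ S (t+1) ∧ createdStar Vmem x) := by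
    ext x
    rw [show 3*(t+1) = 3*t+3 from by ring]
    rw [main_descr Vmem w θ hw0 hwV hθpos S t x]
    simp
  have hsum1 : (∑ x ∈ ltIter (redStarW Vmem w θ) (starTheta Vmem θ)
      (S.image (fun s => (s, (StarIdx.gateway : StarIdx k)))) (3*(t+1)),
        redStarVW Vmem x) = (k : ℝ) * ((multiIter w θ S (t+1)).card : ℝ) := by
    rw [hL, sum_vw_full]
  have hsum2 : (∑ x ∈ Finset.univ.filter
      (fun x : U × StarIdx k => createdStar Vmem x), redStarVW Vmem x)
      = (k : ℝ) * (Fintype.card U : ℝ) := by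
    rw [show Finset.univ.filter (fun x : U × StarIdx k => createdStar Vmem x)
        = Finset.univ.filter (fun x : U × StarIdx k =>
            x.1 ∈ (Finset.univ : Finset U) ∧ createdStar Vmem x) from by simp]
    rw [sum_vw_full]
    simp [Finset.card_univ]
  rw [hsum1, hsum2]
  have hk' : (0:ℝ) < (k:ℝ) := by
    have : (1:ℝ) ≤ (k:ℝ) := by exact_mod_cast hk
    linarith
  rw [show β * ((k:ℝ) * (Fintype.card U : ℝ)) = (k:ℝ) * (β * (Fintype.card U : ℝ)) by ring]
  rw [mul_le_mul_iff_of_pos_left hk']
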